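/- Let n ≥ 1, let G be a simple graph on Fin n with Laplacian matrix L (over ℝ) and degree vector d. Suppose D is a real symmetric n×n matrix with zero diagonal whose off-diagonal entries satisfy D i j ≥ 1 for all i ≠ j, and suppose (L·D + 2·I − (2·1 − d)·1ᵀ) i j = 0 for all indices i < j (indices ordered as elements of Fin n). Then G is a tree and D is its distance matrix, i.e., D i j = dist_G(i, j) for all i, j. -/

import Mathlib

open Matrix Finset BigOperators

namespace UTIaux

open SimpleGraph

variable {V : Type*} [Fintype V] [DecidableEq V]

set_option linter.unusedSectionVars false

lemma parent_exists (G : SimpleGraph V) (hc : G.Connected) (v m : V) (hne : v ≠ m) :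
    ∃ s, G.Adj v s ∧ G.dist s m + 1 = G.dist v m := by
  obtain ⟨p, hp, hl⟩ := hc.exists_path_of_dist v m
  cases p with
  | nil => exact absurd rfl hne
  | cons hadj q =>
    rename_i s
    refine ⟨s, hadj, ?_⟩
    have h1 : G.dist s m ≤ q.length := SimpleGraph.dist_le q
    obtain ⟨w, hw⟩ := (hc s m).exists_walk_length_eq_dist
    have h2 : G.dist v m ≤ G.dist s m + 1 := by
      have := SimpleGraph.dist_le (SimpleGraph.Walk.cons hadj w)
      simpa [hw] using this
    simp only [SimpleGraph.Walk.length_cons] at hl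
    omega

lemma conn_card_le (G : SimpleGraph V) [DecidableRel G.Adj] (hc : G.Connected) :
    Fintype.card V ≤ G.edgeFinset.card + 1 := by
  classical
  obtain ⟨m⟩ := hc.nonempty
  choose f hf1 hf2 using fun (v : V) (h : v ≠ m) => parent_exists G hc v m h
  set g : V → Sym2 V := fun v => if h : v = m then s(v, v) else s(v, f v h) with hg
  have hmem : ∀ v ∈ ({m} : Finset V)ᶜ, g v ∈ G.edgeFinset := by
    intro v hv
    rw [Finset.mem_compl, Finset.mem_singleton] at hv
    rw [hg]
    simp only [hv, dif_neg, not_false_iff]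
    rw [SimpleGraph.mem_edgeFinset, SimpleGraph.mem_edgeSet]
    exact hf1 v hv
  have hdistpos : ∀ v, v ≠ m → 0 < G.dist v m := fun v hv =>
    (hc v m).pos_dist_of_ne hv
  have hinj : ∀ v ∈ ({m} : Finset V)ᶜ, ∀ w ∈ ({m} : Finset V)ᶜ, g v = g w → v = w := by
    intro v hv w hw hvw
    rw [Finset.mem_compl, Finset.mem_singleton] at hv hw
    rw [hg] at hvw
    simp only [dif_neg hv, dif_neg hw, Sym2.eq_iff] at hvw
    rcases hvw with ⟨h1, -⟩ | ⟨h1, h2⟩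
    · exact h1
    · exfalso
      have e1 := hf2 v hv
      have e2 := hf2 w hw
      rw [h2] at e1
      rw [← h1] at e2
      omega
  have := Finset.card_le_card_of_injOn g hmem (fun v hv w hw => hinj v hv w hw)
  have hcc : (({m} : Finset V)ᶜ).card = Fintype.card V - 1 := by
    rw [Finset.card_compl, Finset.card_singleton]
  have hpos : 0 < Fintype.card V := Fintype.card_pos_iff.mpr ⟨m⟩
  omega

lemma conn_card_le_ncard (G : SimpleGraph V) [DecidableRel G.Adj] (hc : G.Connected) :
    Fintype.card V ≤ G.edgeSet.ncard + 1 := by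
  have h := conn_card_le G hc
  have : G.edgeFinset.card = G.edgeSet.ncard := (Set.ncard_eq_toFinset_card' _).symm
  omega

lemma acyclic_of_card (G : SimpleGraph V) [DecidableRel G.Adj] (hc : G.Connected)
    (hcard : G.edgeFinset.card + 1 ≤ Fintype.card V) : G.IsAcyclic := by
  classical
  by_contra hcyc
  rw [SimpleGraph.IsAcyclic] at hcyc
  push_neg at hcyc
  obtain ⟨v, c, hcyc⟩ := hcyc
  cases c with
  | nil => exact hcyc.not_of_nil
  | cons hadj q =>
    rename_i x
    have he : s(v, x) ∈ (SimpleGraph.Walk.cons hadj q).edges := by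
      simp [SimpleGraph.Walk.edges_cons]
    set G' : SimpleGraph V := G \ SimpleGraph.fromEdgeSet {s(v, x)} with hG'
    have hreach : G'.Reachable v x :=
      (SimpleGraph.adj_and_reachable_delete_edges_iff_exists_cycle.mpr
        ⟨v, SimpleGraph.Walk.cons hadj q, hcyc, he⟩).2
    have hstep : ∀ a b : V, G.Adj a b → G'.Reachable a b := by
      intro a b hab
      by_cases h : s(a, b) = s(v, x)
      · rw [Sym2.eq_iff] at h
        rcases h with ⟨rfl, rfl⟩ | ⟨rfl, rfl⟩
        · exact hreach
        · exact hreach.symm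
      · refine SimpleGraph.Adj.reachable ?_
        rw [hG', SimpleGraph.sdiff_adj]
        refine ⟨hab, ?_⟩
        rw [SimpleGraph.fromEdgeSet_adj]
        rintro ⟨h1, -⟩
        exact h (Set.mem_singleton_iff.mp h1)
    have hG'conn : G'.Connected := by
      haveI : Nonempty V := ⟨v⟩
      refine SimpleGraph.Connected.mk ?_
      intro a b
      obtain ⟨p⟩ := hc a b
      induction p with
      | nil => exact SimpleGraph.Reachable.refl _
      | cons h p ih => exact (hstep _ _ h).trans ih
    have hES : G'.edgeSet = G.edgeSet \ {s(v, x)} := by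
      rw [hG']
      simp [SimpleGraph.edgeSet_sdiff, SimpleGraph.edgeSet_fromEdgeSet,
        SimpleGraph.edgeSet_sdiff_sdiff_isDiag]
    have hcard' := conn_card_le_ncard G' hG'conn
    have hfin : G.edgeSet.Finite := Set.toFinite _
    have hmemE : s(v, x) ∈ G.edgeSet := hadj
    have hnc : G'.edgeSet.ncard = G.edgeSet.ncard - 1 := by
      rw [hES, Set.ncard_diff_singleton_of_mem hmemE]
    have hpos : 0 < G.edgeSet.ncard := Set.ncard_pos hfin |>.mpr ⟨_, hmemE⟩
    have hEq : G.edgeFinset.card = G.edgeSet.ncard := (Set.ncard_eq_toFinset_card' _).symm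
    omega

lemma tree_neighbors (G : SimpleGraph V) (hc : G.Connected) (hac : G.IsAcyclic)
    (k b : V) (hkb : k ≠ b) :
    ∃ s, G.Adj k s ∧ G.dist s b + 1 = G.dist k b ∧
      ∀ t, G.Adj k t → t ≠ s → G.dist t b = G.dist k b + 1 := by
  obtain ⟨p, hp, hl⟩ := hc.exists_path_of_dist k b
  cases p with
  | nil => exact absurd rfl hkb
  | cons hadj q =>
    rename_i s
    simp only [SimpleGraph.Walk.length_cons] at hl
    have hsb : G.dist s b + 1 = G.dist k b := by
      have h1 : G.dist s b ≤ q.length := SimpleGraph.dist_le q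
      obtain ⟨w, hw⟩ := (hc s b).exists_walk_length_eq_dist
      have h2 : G.dist k b ≤ G.dist s b + 1 := by
        have := SimpleGraph.dist_le (SimpleGraph.Walk.cons hadj w)
        simpa [hw] using this
      omega
    refine ⟨s, hadj, hsb, ?_⟩
    intro t hkt hts
    have hub : G.dist t b ≤ G.dist k b + 1 := by
      obtain ⟨w, hw⟩ := (hc k b).exists_walk_length_eq_dist
      have := SimpleGraph.dist_le (SimpleGraph.Walk.cons hkt.symm w)
      simpa [hw, Nat.add_comm] using this
    have hlb : G.dist k b + 1 ≤ G.dist t b := by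
      by_contra hcon
      push_neg at hcon
      obtain ⟨r, hr, hrl⟩ := hc.exists_path_of_dist t b
      have hknotin : k ∉ r.support := by
        intro hk
        have hdrop : G.dist k b ≤ (r.dropUntil k hk).length := SimpleGraph.dist_le _
        have htake : 1 ≤ (r.takeUntil k hk).length := by
          by_contra h0
          push_neg at h0
          interval_cases h : (r.takeUntil k hk).length
          · have := SimpleGraph.Walk.eq_of_length_eq_zero h
            exact hkt.ne' this
        have hsum : (r.takeUntil k hk).length + (r.dropUntil k hk).length = r.length := by
          have := congr_arg SimpleGraph.Walk.length (r.take_spec hk)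
          rwa [SimpleGraph.Walk.length_append] at this
        omega
      have hpath2 : (SimpleGraph.Walk.cons hkt r).IsPath := hr.cons hknotin
      have := hac.path_unique ⟨SimpleGraph.Walk.cons hkt r, hpath2⟩
        ⟨SimpleGraph.Walk.cons hadj q, hp⟩
      rw [Subtype.mk.injEq] at this
      injection this with h1 h2 h3
      exact hts h2
    omega

lemma tree_sum (G : SimpleGraph V) [DecidableRel G.Adj] (hc : G.Connected)
    (hac : G.IsAcyclic) (k b : V) (hkb : k ≠ b) :
    ∑ t ∈ G.neighborFinset k, ((G.dist k b : ℝ) + 1 - G.dist t b) = 2 := by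
  obtain ⟨s, hks, hsd, hfar⟩ := tree_neighbors G hc hac k b hkb
  rw [Finset.sum_eq_single_of_mem s ((mem_neighborFinset G k s).mpr hks)]
  · have : (G.dist s b : ℝ) + 1 = G.dist k b := by exact_mod_cast congrArg Nat.cast hsd
    linarith
  · intro t ht hts
    have hd := hfar t ((mem_neighborFinset G k t).mp ht) hts
    rw [hd]
    push_cast
    ring

lemma maxp (G : SimpleGraph V) [DecidableRel G.Adj] (hc : G.Connected)
    (S : Set V) (b : V) (hb : b ∈ S) (h : V → ℝ) (hS : ∀ k ∈ S, h k = 0)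
    (hharm : ∀ k ∉ S, (G.degree k : ℝ) * h k = ∑ t ∈ G.neighborFinset k, h t) :
    ∀ k, h k ≤ 0 := by
  have hne : (Finset.univ : Finset V).Nonempty := ⟨b, Finset.mem_univ b⟩
  obtain ⟨k0, -, hk0⟩ := Finset.exists_max_image Finset.univ h hne
  set M := h k0 with hM
  have hmax : ∀ t : V, h t ≤ M := fun t => hk0 t (Finset.mem_univ t)
  suffices hM0 : M ≤ 0 by
    intro k; exact le_trans (hmax k) hM0
  by_contra hMpos
  push_neg at hMpos
  have key : ∀ (u c : V) (p : G.Walk u c), c ∈ S → h u = M → False := by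
    intro u c p
    induction p with
    | nil =>
      intro hcS hu
      rw [hS _ hcS] at hu
      exact absurd hu.symm (ne_of_gt hMpos)
    | cons hadj q ih =>
      rename_i x y z
      intro hcS hu
      by_cases hxS : x ∈ S
      · rw [hS _ hxS] at hu
        exact absurd hu.symm (ne_of_gt hMpos)
      · have hh := hharm x hxS
        have hsum : ∑ t ∈ G.neighborFinset x, (M - h t) = 0 := by
          rw [Finset.sum_sub_distrib, Finset.sum_const, card_neighborFinset_eq_degree,
            nsmul_eq_mul, ← hh, hu]
          ring
        have hall := (Finset.sum_eq_zero_iff_of_nonneg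
          (fun t _ => by linarith [hmax t])).mp hsum
        have hcM : M - h y = 0 := hall y ((mem_neighborFinset G x y).mpr hadj)
        exact ih hcS (by linarith)
  obtain ⟨p⟩ := hc k0 b
  exact key k0 b p hb rfl

lemma sum_nbr (G : SimpleGraph V) [DecidableRel G.Adj]
    (C : Finset V) (hC : ∀ i ∈ C, ∀ k, G.Adj i k → k ∈ C) (f : V → ℝ) :
    ∑ i ∈ C, ∑ k ∈ G.neighborFinset i, f k = ∑ k ∈ C, (G.degree k : ℝ) * f k := by
  have h1 : ∀ i : V, ∑ k ∈ G.neighborFinset i, f k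
      = ∑ k ∈ Finset.univ, if G.Adj i k then f k else 0 := by
    intro i
    rw [neighborFinset_eq_filter, Finset.sum_filter]
  calc ∑ i ∈ C, ∑ k ∈ G.neighborFinset i, f k
      = ∑ i ∈ C, ∑ k ∈ Finset.univ, if G.Adj i k then f k else 0 := by
        exact Finset.sum_congr rfl fun i _ => h1 i
    _ = ∑ k ∈ Finset.univ, ∑ i ∈ C, if G.Adj i k then f k else 0 := Finset.sum_comm
    _ = ∑ k ∈ Finset.univ, if k ∈ C then (G.degree k : ℝ) * f k else 0 := by
        refine Finset.sum_congr rfl fun k _ => ?_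
        by_cases hk : k ∈ C
        · simp only [hk, if_true]
          have hCk : C.filter (fun i => G.Adj i k) = G.neighborFinset k := by
            ext i
            simp only [Finset.mem_filter, mem_neighborFinset]
            constructor
            · rintro ⟨-, h⟩; exact h.symm
            · intro h; exact ⟨hC k hk i h, h.symm⟩
          rw [Finset.sum_ite, Finset.sum_const_zero, add_zero, Finset.sum_const, hCk,
            card_neighborFinset_eq_degree, nsmul_eq_mul]
        · simp only [hk, if_false]
          refine Finset.sum_eq_zero fun i hi => ?_
          rw [if_neg fun h => hk (hC i hi k h)]
    _ = ∑ k ∈ C, (G.degree k : ℝ) * f k := by rw [Finset.sum_ite_mem, Finset.univ_inter]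

end UTIaux

/-- Unweighted case: if a symmetric zero-diagonal matrix `D` with off-diagonal entries
at least `1` satisfies the upper-triangular part of `L·D + 2·I = (2·1 − d)·1ᵀ`,
then `G` is a tree and `D` is its distance matrix. -/
theorem upper_triangular_identity_tree_and_distance {n : ℕ} (hn : 1 ≤ n)
    (G : SimpleGraph (Fin n)) [DecidableRel G.Adj]
    (L : Matrix (Fin n) (Fin n) ℝ) (hL : L = G.lapMatrix ℝ)
    (d : Fin n → ℝ) (hd : ∀ i, d i = (G.degree i : ℝ))
    (D : Matrix (Fin n) (Fin n) ℝ)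
    (hDsymm : D.IsSymm) (hDdiag : ∀ i, D i i = 0)
    (hDoff : ∀ i j : Fin n, i ≠ j → 1 ≤ D i j)
    (hupper : ∀ i j : Fin n, i < j →
      ((L * D + (2 : ℝ) • (1 : Matrix (Fin n) (Fin n) ℝ) -
        Matrix.vecMulVec (fun i => 2 - d i) (fun _ => (1 : ℝ)) :
        Matrix (Fin n) (Fin n) ℝ)) i j = 0) :
    G.IsTree ∧ ∀ i j, D i j = (G.dist i j : ℝ) := by
  classical
  subst hL
  open SimpleGraph UTIaux in
  -- the key upper-triangular equations
  have key : ∀ i j : Fin n, i < j →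
      ∑ k ∈ G.neighborFinset i, (D i j + 1 - D k j) = 2 := by
    intro i j hij
    have h := hupper i j hij
    have hne : i ≠ j := ne_of_lt hij
    rw [Matrix.sub_apply, Matrix.add_apply, Matrix.smul_apply, Matrix.one_apply_ne hne,
      Matrix.vecMulVec_apply, hd] at h
    have hLD : (G.lapMatrix ℝ * D) i j
        = (G.degree i : ℝ) * D i j - ∑ k ∈ G.neighborFinset i, D k j := by
      rw [lapMatrix, Matrix.sub_mul, Matrix.sub_apply, adjMatrix_mul_apply]
      congr 1
      rw [degMatrix, Matrix.diagonal_mul]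
    rw [hLD] at h
    rw [Finset.sum_sub_distrib, Finset.sum_const, card_neighborFinset_eq_degree,
      nsmul_eq_mul]
    simp only [smul_zero] at h
    ring_nf
    ring_nf at h
    linarith
  -- expansion helper
  have EXP : ∀ (i : Fin n) (c : ℝ) (g : Fin n → ℝ),
      ∑ k ∈ G.neighborFinset i, (c - g k)
        = (G.degree i : ℝ) * c - ∑ k ∈ G.neighborFinset i, g k := by
    intro i c g
    rw [Finset.sum_sub_distrib, Finset.sum_const, card_neighborFinset_eq_degree, nsmul_eq_mul]
  -- the top vertex
  set m : Fin n := ⟨n - 1, by omega⟩ with hm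
  have hlem : ∀ i : Fin n, i ≤ m := by
    intro i
    have := i.isLt
    rw [Fin.le_def]
    simp only [hm]
    omega
  -- the erase identity
  have ERASE : ∀ (C : Finset (Fin n)) (j' : Fin n), j' ∈ C →
      (∀ i ∈ C, ∀ k, G.Adj i k → k ∈ C) → (∀ i ∈ C, i ≠ j' → i < j') →
      (∑ k ∈ G.neighborFinset j', D k j') + ∑ i ∈ C, (G.degree i : ℝ)
        - (G.degree j' : ℝ) = 2 * ((C.card : ℝ) - 1) := by
    intro C j' hj'C hclosed hlt
    have h1 : ∑ i ∈ C.erase j', ∑ k ∈ G.neighborFinset i, (D i j' + 1 - D k j')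
        = 2 * ((C.card : ℝ) - 1) := by
      rw [Finset.sum_congr rfl (fun i hi =>
        key i j' (hlt i (Finset.mem_of_mem_erase hi) (Finset.ne_of_mem_erase hi)))]
      rw [Finset.sum_const, Finset.card_erase_of_mem hj'C, nsmul_eq_mul]
      have hC1 : 1 ≤ C.card := Finset.card_pos.mpr ⟨j', hj'C⟩
      push_cast [hC1]
      ring
    have h2 : ∑ i ∈ C.erase j', ∑ k ∈ G.neighborFinset i, (D i j' + 1 - D k j')
        = (∑ k ∈ G.neighborFinset j', D k j') + ∑ i ∈ C, (G.degree i : ℝ)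
          - (G.degree j' : ℝ) := by
      have e1 : ∀ i ∈ C.erase j', ∑ k ∈ G.neighborFinset i, (D i j' + 1 - D k j')
          = (G.degree i : ℝ) * (D i j' + 1) - ∑ k ∈ G.neighborFinset i, D k j' :=
        fun i _ => EXP i (D i j' + 1) (fun k => D k j')
      rw [Finset.sum_congr rfl e1, Finset.sum_sub_distrib]
      have e2 : ∑ i ∈ C.erase j', ∑ k ∈ G.neighborFinset i, D k j'
          = (∑ k ∈ C, (G.degree k : ℝ) * D k j') - ∑ k ∈ G.neighborFinset j', D k j' := by
        have := Finset.add_sum_erase C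
          (fun i => ∑ k ∈ G.neighborFinset i, D k j') hj'C
        rw [← sum_nbr G C hclosed (fun k => D k j')]
        linarith [this]
      have e3 : ∑ i ∈ C.erase j', (G.degree i : ℝ) * (D i j' + 1)
          = (∑ i ∈ C, (G.degree i : ℝ) * D i j') + ∑ i ∈ C, (G.degree i : ℝ)
            - (G.degree j' : ℝ) := by
        have g1 : ∑ i ∈ C.erase j', (G.degree i : ℝ) * (D i j' + 1)
            = ∑ i ∈ C.erase j', ((G.degree i : ℝ) * D i j' + (G.degree i : ℝ)) := by
          refine Finset.sum_congr rfl fun i _ => by ring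
        rw [g1, Finset.sum_add_distrib,
          Finset.sum_erase C (show (G.degree j' : ℝ) * D j' j' = 0 by rw [hDdiag]; ring)]
        have g3 := Finset.sum_erase_add C (fun i => ((G.degree i : ℝ))) hj'C
        linarith [g3]
      rw [e2, e3]
      ring
    linarith [h1, h2]
  -- neighbor sums are at least the degree
  have NBR : ∀ j' : Fin n, (G.degree j' : ℝ) ≤ ∑ k ∈ G.neighborFinset j', D k j' := by
    intro j'
    have : ∀ k ∈ G.neighborFinset j', (1 : ℝ) ≤ D k j' := by
      intro k hk
      exact hDoff k j' (G.ne_of_adj ((SimpleGraph.mem_neighborFinset G j' k).mp hk)).symm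
    calc (G.degree j' : ℝ) = ∑ _k ∈ G.neighborFinset j', (1 : ℝ) := by
          rw [Finset.sum_const, SimpleGraph.card_neighborFinset_eq_degree, nsmul_eq_mul, mul_one]
      _ ≤ ∑ k ∈ G.neighborFinset j', D k j' := Finset.sum_le_sum this
  -- connectivity
  have hconn : G.Connected := by
    have hreach : ∀ v, G.Reachable v m := by
      intro v
      by_contra hvm
      set C : Finset (Fin n) := Finset.univ.filter (fun k => G.Reachable v k) with hC
      have hmemC : ∀ k, k ∈ C ↔ G.Reachable v k := by
        intro k; rw [hC, Finset.mem_filter]; simp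
      have hclosed : ∀ i ∈ C, ∀ k, G.Adj i k → k ∈ C := by
        intro i hi k hik
        rw [hmemC] at hi ⊢
        exact hi.trans hik.reachable
      have hvC : v ∈ C := (hmemC v).mpr (SimpleGraph.Reachable.refl v)
      have hmC : m ∉ C := fun h => hvm ((hmemC m).mp h)
      have hltm : ∀ i ∈ C, i < m := fun i hi =>
        lt_of_le_of_ne (hlem i) (fun h => hmC (h ▸ hi))
      -- star identity: sum of degrees over the component is 2 * |C|
      have hstar : ∑ i ∈ C, (G.degree i : ℝ) = 2 * C.card := by
        have h1 : ∑ i ∈ C, ∑ k ∈ G.neighborFinset i, (D i m + 1 - D k m)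
            = 2 * (C.card : ℝ) := by
          rw [Finset.sum_congr rfl (fun i hi => key i m (hltm i hi)), Finset.sum_const,
            nsmul_eq_mul, mul_comm]
        have h2 : ∑ i ∈ C, ∑ k ∈ G.neighborFinset i, (D i m + 1 - D k m)
            = ∑ i ∈ C, (G.degree i : ℝ) := by
          have e1 : ∀ i ∈ C, ∑ k ∈ G.neighborFinset i, (D i m + 1 - D k m)
              = (G.degree i : ℝ) * (D i m + 1) - ∑ k ∈ G.neighborFinset i, D k m :=
            fun i _ => EXP i (D i m + 1) (fun k => D k m)
          rw [Finset.sum_congr rfl e1, Finset.sum_sub_distrib,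
            sum_nbr G C hclosed (fun k => D k m)]
          have e2 : ∑ i ∈ C, (G.degree i : ℝ) * (D i m + 1)
              = ∑ i ∈ C, ((G.degree i : ℝ) * D i m + (G.degree i : ℝ)) :=
            Finset.sum_congr rfl fun i _ => by ring
          rw [e2, Finset.sum_add_distrib]
          ring
        linarith [h1, h2]
      -- the max of the component
      set j' : Fin n := C.max' ⟨v, hvC⟩ with hj'
      have hj'C : j' ∈ C := Finset.max'_mem C ⟨v, hvC⟩
      have hltj : ∀ i ∈ C, i ≠ j' → i < j' := fun i hi hne =>
        lt_of_le_of_ne (Finset.le_max' C i hi) hne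
      have hER := ERASE C j' hj'C hclosed hltj
      have hNB := NBR j'
      have hC1 : 1 ≤ C.card := Finset.card_pos.mpr ⟨v, hvC⟩
      linarith [hER, hNB, hstar]
    haveI : Nonempty (Fin n) := ⟨m⟩
    exact SimpleGraph.Connected.mk (fun a b => (hreach a).trans (hreach b).symm)
  -- edge count
  have hglobal := ERASE Finset.univ m (Finset.mem_univ m)
    (fun i _ k _ => Finset.mem_univ k)
    (fun i _ hne => lt_of_le_of_ne (hlem i) hne)
  have hNBm := NBR m
  have hdegsum : (∑ i : Fin n, (G.degree i : ℝ)) ≤ 2 * ((n : ℝ) - 1) := by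
    have hcard : ((Finset.univ : Finset (Fin n)).card : ℝ) = n := by
      rw [Finset.card_univ, Fintype.card_fin]
    rw [hcard] at hglobal
    linarith [hglobal, hNBm]
  have hedge : G.edgeFinset.card + 1 ≤ n := by
    have hsum := SimpleGraph.sum_degrees_eq_twice_card_edges G
    have hcast : ((∑ i : Fin n, G.degree i : ℕ) : ℝ) = ∑ i : Fin n, (G.degree i : ℝ) := by
      push_cast; rfl
    have h2 : ((2 * G.edgeFinset.card : ℕ) : ℝ) ≤ 2 * ((n : ℝ) - 1) := by
      rw [← hsum, hcast]; exact hdegsum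
    have h3 : (2 * G.edgeFinset.card : ℝ) ≤ 2 * ((n : ℝ) - 1) := by push_cast at h2 ⊢; linarith
    have h4 : (G.edgeFinset.card : ℝ) ≤ (n : ℝ) - 1 := by linarith
    have h5 : (G.edgeFinset.card : ℝ) + 1 ≤ (n : ℝ) := by linarith
    exact_mod_cast h5
  have hac : G.IsAcyclic := acyclic_of_card G hconn (by
    rwa [Fintype.card_fin])
  have htree : G.IsTree := ⟨hconn, hac⟩
  refine ⟨htree, ?_⟩
  -- D equals the distance matrix
  have STEP : ∀ b : Fin n, (∀ c : Fin n, b < c → ∀ a, D a c = (G.dist a c : ℝ)) →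
      ∀ a, D a b = (G.dist a b : ℝ) := by
    intro b IH
    set h : Fin n → ℝ := fun k => D k b - (G.dist k b : ℝ) with hh
    set S : Set (Fin n) := {k | b ≤ k} with hS
    have hbS : b ∈ S := le_refl b
    have hS0 : ∀ k ∈ S, h k = 0 := by
      intro k hk
      rcases eq_or_lt_of_le (show b ≤ k from hk) with heq | hlt
      · rw [hh]
        simp only [← heq, hDdiag b, SimpleGraph.dist_self, Nat.cast_zero, sub_zero]
      · have h1 : D b k = (G.dist b k : ℝ) := IH k hlt b
        have h2 : D k b = D b k := (hDsymm.apply k b).symm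
        have h4 : G.dist b k = G.dist k b := SimpleGraph.dist_comm
        rw [hh]
        simp only [h2, h1, h4, sub_self]
    have hharm : ∀ k ∉ S, (G.degree k : ℝ) * h k = ∑ t ∈ G.neighborFinset k, h t := by
      intro k hk
      have hkb : k < b := by
        rw [hS, Set.mem_setOf_eq] at hk
        exact lt_of_not_ge hk
      have h1 := key k b hkb
      have h2 := tree_sum G hconn hac k b (ne_of_lt hkb)
      rw [EXP k (D k b + 1) (fun t => D t b)] at h1
      rw [EXP k ((G.dist k b : ℝ) + 1) (fun t => (G.dist t b : ℝ))] at h2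
      have h3 : ∑ t ∈ G.neighborFinset k, h t
          = ∑ t ∈ G.neighborFinset k, D t b - ∑ t ∈ G.neighborFinset k, (G.dist t b : ℝ) := by
        rw [hh, Finset.sum_sub_distrib]
      rw [hh, h3]
      ring_nf
      ring_nf at h1 h2
      linarith [h1, h2]
    have hle := maxp G hconn S b hbS h hS0 hharm
    have hge := maxp G hconn S b hbS (fun k => -(h k))
      (fun k hk => by show -(h k) = 0; rw [hS0 k hk, neg_zero])
      (fun k hk => by
        show (G.degree k : ℝ) * (-(h k)) = ∑ t ∈ G.neighborFinset k, -(h t)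
        rw [mul_neg, hharm k hk, ← Finset.sum_neg_distrib])
    intro a
    have h1 := hle a
    have h2 : -(h a) ≤ 0 := hge a
    have h3 : h a = 0 := by linarith [h1, h2]
    rw [hh] at h3
    simp only at h3
    linarith [h3]
  have COL : ∀ (t : ℕ) (b : Fin n), n - 1 - b.val ≤ t → ∀ a, D a b = (G.dist a b : ℝ) := by
    intro t
    induction t with
    | zero =>
      intro b hb
      refine STEP b ?_
      intro c hc
      exfalso
      have h1 := c.isLt
      have h2 : b.val < c.val := hc
      omega
    | succ t iht =>
      intro b hb
      refine STEP b ?_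
      intro c hc
      refine iht c ?_
      have h1 := c.isLt
      have h2 : b.val < c.val := hc
      omega
  intro i j
  exact COL (n - 1 - j.val) j le_rfl i
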